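/- Let n = p₁ p₂ ⋯ p_k be the product of the k smallest primes, and let π = p_{k+1} be the (k+1)-st smallest prime. Then every prime p with π ≤ p < 2π divides n^(n^n) - 1. -/

import Mathlib

open Finset

theorem primes_up_to_double_divide (k : ℕ) (hk : 1 ≤ k) (n π : ℕ)
    (hn : n = ∏ i ∈ Finset.range k, Nat.nth Nat.Prime i)
    (hπ : π = Nat.nth Nat.Prime k) :
    ∀ p : ℕ, p.Prime → π ≤ p → p < 2 * π → p ∣ n ^ (n ^ n) - 1 := by
  have hinf : {q : ℕ | q.Prime}.Infinite := Nat.infinite_setOf_prime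
  have hdvd_n : ∀ i < k, Nat.nth Nat.Prime i ∣ n := by
    intro i hi
    rw [hn]
    exact Finset.dvd_prod_of_mem _ (Finset.mem_range.2 hi)
  have hnpos : 0 < n := by
    rw [hn]; exact Finset.prod_pos fun i _ => (Nat.prime_nth_prime i).pos
  have h2n : 2 ∣ n := by
    have := hdvd_n 0 hk
    rwa [Nat.nth_prime_zero_eq_two] at this
  have hn2 : 2 ≤ n := Nat.le_of_dvd hnpos h2n
  -- every prime < π divides n
  have hsmall : ∀ q : ℕ, q.Prime → q < π → q ∣ n := by
    intro q hq hqπ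
    have hc : Nat.count Nat.Prime q < k := by
      rw [← Nat.nth_lt_nth hinf, Nat.nth_count hq, ← hπ]
      exact hqπ
    have := hdvd_n _ hc
    rwa [Nat.nth_count hq] at this
  -- π ≤ 2 * n (Bertrand)
  have hπ2n : π ≤ 2 * n := by
    obtain ⟨r, hr, hnr, hr2n⟩ := Nat.exists_prime_lt_and_le_two_mul n hnpos.ne'
    refine le_trans ?_ hr2n
    by_contra h
    push_neg at h
    exact absurd (Nat.le_of_dvd hnpos (hsmall r hr h)) (not_le.2 hnr)
  have h2π : 2 < π := by
    rw [hπ, ← Nat.nth_prime_zero_eq_two]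
    exact (Nat.nth_lt_nth hinf).2 hk
  intro p hp hpπ hp2π
  have hppos : 0 < p - 1 := by
    have := hp.two_le; omega
  have hpodd : 2 ∣ p - 1 := by
    have h2p : 2 < p := lt_of_lt_of_le h2π hpπ
    rcases hp.eq_two_or_odd' with h | h
    · omega
    · obtain ⟨m, hm⟩ := h; omega
  have hcop : ¬ p ∣ n := by
    intro hdvd
    rw [hn] at hdvd
    obtain ⟨i, hi, hpi⟩ := hp.prime.exists_mem_finset_dvd hdvd
    have heq : p = Nat.nth Nat.Prime i :=
      ((Nat.prime_dvd_prime_iff_eq hp (Nat.prime_nth_prime i)).1 hpi)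
    have : Nat.nth Nat.Prime i < π := by
      rw [hπ]; exact (Nat.nth_lt_nth hinf).2 (Finset.mem_range.1 hi)
    omega
  -- p - 1 divides n ^ n
  have hkey : p - 1 ∣ n ^ n := by
    rw [← Nat.factorization_le_iff_dvd hppos.ne' (pow_pos hnpos n).ne']
    intro q
    by_cases hq : q.Prime
    · by_cases hqd : q ∣ p - 1
      · -- q < π
        have hqπ : q < π := by
          rcases eq_or_ne q 2 with rfl | hq2
          · exact h2π
          · obtain ⟨m, hm⟩ := hqd
            have h2m : 2 ∣ m := by
              rcases (Nat.prime_two.dvd_mul.1 (hm ▸ hpodd)) with h | h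
              · exact absurd ((Nat.prime_dvd_prime_iff_eq Nat.prime_two hq).1 h).symm hq2
              · exact h
            have hm0 : 0 < m := by
              rcases Nat.eq_zero_or_pos m with rfl | h
              · simp at hm; omega
              · exact h
            have hm2 : 2 ≤ m := Nat.le_of_dvd hm0 h2m
            -- 2 * q ≤ q * m = p - 1 < 2 * π
            have : 2 * q ≤ p - 1 := by
              calc 2 * q ≤ m * q := Nat.mul_le_mul_right q hm2
                _ = q * m := Nat.mul_comm m q
                _ = p - 1 := hm.symm
            omega
        have hqn : q ∣ n := hsmall q hq hqπ
        have hfn1 : 1 ≤ n.factorization q := Nat.Prime.factorization_pos_of_dvd hq hnpos.ne' hqn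
        set a := (p - 1).factorization q with ha
        have hqa : q ^ a ∣ p - 1 := Nat.ordProj_dvd _ _
        have hq2 : 2 ^ a ≤ q ^ a := Nat.pow_le_pow_left hq.two_le a
        have hub : q ^ a ≤ p - 1 := Nat.le_of_dvd hppos hqa
        have han : a ≤ n := by
          by_contra hcon
          push_neg at hcon
          have h1 : 2 ^ (n + 1) ≤ 2 ^ a := Nat.pow_le_pow_right (by norm_num) hcon
          have h2 : 2 ^ (n + 1) < 4 * n := by
            calc 2 ^ (n + 1) ≤ p - 1 := le_trans h1 (le_trans hq2 hub)
              _ < 2 * π := by omega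
              _ ≤ 4 * n := by omega
          have h3 : n ≤ 2 ^ (n - 1) := by
            have := Nat.lt_two_pow_self (n := n - 1)
            omega
          have h4 : 2 ^ (n + 1) = 4 * 2 ^ (n - 1) := by
            have : n + 1 = (n - 1) + 2 := by omega
            rw [this, pow_add]; ring
          omega
        rw [Nat.factorization_pow]
        simp only [Finsupp.smul_apply, smul_eq_mul]
        calc a ≤ n := han
          _ ≤ n * n.factorization q := Nat.le_mul_of_pos_right n hfn1
      · rw [Nat.factorization_eq_zero_of_not_dvd hqd]; simp
    · rw [Nat.factorization_eq_zero_of_not_prime _ hq]; simp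
  -- conclude via Fermat
  have : Fact p.Prime := ⟨hp⟩
  have hne : (n : ZMod p) ≠ 0 := by
    rw [Ne, ZMod.natCast_eq_zero_iff]
    exact hcop
  obtain ⟨c, hc⟩ := hkey
  have hone : (n : ZMod p) ^ (n ^ n) = 1 := by
    rw [hc, pow_mul, ZMod.pow_card_sub_one_eq_one hne, one_pow]
  have h1le : 1 ≤ n ^ n ^ n := Nat.one_le_pow _ _ hnpos
  rw [← ZMod.natCast_eq_zero_iff]
  push_cast [h1le]
  rw [hone]
  ring
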